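/- If g-regularity of a (K,L,F,Z,S) EPDA holds and Z/F = t/K for an integer t, then the delivery time T = S/F of the associated scheme equals (K/g)(1 - Z/F) = (K-t)/g, and g ≤ t + L; in particular T ≥ (K-t)/(t+L). -/

import Mathlib

open scoped Classical

/-- A `(K,L,F,Z,S)` extended placement delivery array (EPDA): an `F × K` array
with entries `none` (the star `★`) or `some s` with `s ∈ [S]`, satisfying
conditions C1–C4. -/
def IsEPDA (L Z : ℕ) {K F S : ℕ} (A : Fin F → Fin K → Option (Fin S)) : Prop :=
  -- C1: the star appears exactly `Z` times in each column
  (∀ k : Fin K, (Finset.univ.filter (fun j => A j k = none)).card = Z) ∧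
  -- C2: every integer in `[S]` occurs at least once
  (∀ s : Fin S, ∃ j k, A j k = some s) ∧
  -- C3: no integer appears more than once in any column
  (∀ (k : Fin K) (j₁ j₂ : Fin F) (s : Fin S),
    A j₁ k = some s → A j₂ k = some s → j₁ = j₂) ∧
  -- C4: in the subarray `A^(s)` (rows and columns containing `s`),
  -- no row contains more than `L` integer entries
  (∀ (s : Fin S) (j : Fin F), (∃ k, A j k = some s) →
    (Finset.univ.filter
      (fun k : Fin K => (∃ j', A j' k = some s) ∧ A j k ≠ none)).card ≤ L)

/-- A `g`-regular EPDA: each integer in `[S]` appears exactly `g` times. -/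
def IsRegularEPDA (g : ℕ) {K F S : ℕ} (A : Fin F → Fin K → Option (Fin S)) : Prop :=
  ∀ s : Fin S, (Finset.univ.filter (fun p : Fin F × Fin K => A p.1 p.2 = some s)).card = g

lemma card_prod_filter_cols {F K : ℕ} (P : Fin F → Fin K → Prop)
    [∀ j k, Decidable (P j k)] :
    (Finset.univ.filter (fun p : Fin F × Fin K => P p.1 p.2)).card
      = ∑ k : Fin K, (Finset.univ.filter (fun j => P j k)).card := by
  classical
  simp only [Finset.card_filter]
  rw [Fintype.sum_prod_type, Finset.sum_comm]

lemma card_prod_filter_rows {F K : ℕ} (P : Fin F → Fin K → Prop)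
    [∀ j k, Decidable (P j k)] :
    (Finset.univ.filter (fun p : Fin F × Fin K => P p.1 p.2)).card
      = ∑ j : Fin F, (Finset.univ.filter (fun k => P j k)).card := by
  classical
  simp only [Finset.card_filter]
  rw [Fintype.sum_prod_type]

/-- For a `g`-regular `(K,L,F,Z,S)` EPDA with `Z/F = t/K` for an
integer `t`, the delivery time `T = S/F` of the associated scheme equals
`(K/g)(1 - Z/F) = (K-t)/g`, and `g ≤ t + L`; in particular
`T ≥ (K-t)/(t+L)`. -/
theorem stmt15 {K L F Z S g : ℕ} (t : ℕ) (A : Fin F → Fin K → Option (Fin S))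
    (hF : 0 < F) (hKpos : 0 < K) (hgpos : 0 < g) (hS : 0 < S)
    (hA : IsEPDA L Z A) (hg : IsRegularEPDA g A)
    (htZ : (Z : ℚ) / (F : ℚ) = (t : ℚ) / (K : ℚ)) :
    (S : ℚ) / F = (K : ℚ) / g * (1 - (Z : ℚ) / F) ∧
    (S : ℚ) / F = ((K : ℚ) - t) / g ∧
    g ≤ t + L ∧
    ((K : ℚ) - t) / ((t : ℚ) + L) ≤ (S : ℚ) / F := by
  obtain ⟨hC1, hC2, hC3, hC4⟩ := hA
  have hF0 : (F : ℚ) ≠ 0 := Nat.cast_ne_zero.mpr hF.ne'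
  have hK0 : (K : ℚ) ≠ 0 := Nat.cast_ne_zero.mpr hKpos.ne'
  have hg0 : (g : ℚ) ≠ 0 := Nat.cast_ne_zero.mpr hgpos.ne'
  -- Z ≤ F
  have hZF : Z ≤ F := by
    have h := hC1 ⟨0, hKpos⟩
    calc Z = (Finset.univ.filter (fun j => A j ⟨0, hKpos⟩ = none)).card := h.symm
      _ ≤ (Finset.univ : Finset (Fin F)).card := Finset.card_filter_le _ _
      _ = F := by simp
  -- t * F = Z * K
  have htF : t * F = Z * K := by
    have h : (t : ℚ) * F = (Z : ℚ) * K := by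
      field_simp at htZ
      linarith [htZ]
    exact_mod_cast h
  -- the set of columns containing s has exactly g elements
  have hcols : ∀ s : Fin S,
      (Finset.univ.filter (fun k : Fin K => ∃ j', A j' k = some s)).card = g := by
    intro s
    have himg : (Finset.univ.filter
          (fun p : Fin F × Fin K => A p.1 p.2 = some s)).image Prod.snd
        = Finset.univ.filter (fun k => ∃ j', A j' k = some s) := by
      ext k
      simp only [Finset.mem_image, Finset.mem_filter, Finset.mem_univ, true_and]
      constructor
      · rintro ⟨p, hp, rfl⟩; exact ⟨p.1, hp⟩
      · rintro ⟨j', hj'⟩; exact ⟨(j', k), hj', rfl⟩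
    rw [← hg s, ← himg, Finset.card_image_of_injOn]
    intro p hp q hq hpq
    simp only [Finset.mem_coe, Finset.mem_filter, Finset.mem_univ, true_and] at hp hq
    have hq' : A q.1 p.2 = some s := by rw [hpq]; exact hq
    have := hC3 p.2 p.1 q.1 s hp hq'
    exact Prod.ext this hpq
  -- g ≤ K
  have hgK : g ≤ K := by
    obtain ⟨s⟩ : Nonempty (Fin S) := ⟨⟨0, hS⟩⟩
    calc g = (Finset.univ.filter (fun k : Fin K => ∃ j', A j' k = some s)).card :=
          (hcols s).symm
      _ ≤ (Finset.univ : Finset (Fin K)).card := Finset.card_filter_le _ _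
      _ = K := by simp
  -- counting non-star entries: S * g = K * (F - Z)
  have hcount : S * g = K * (F - Z) := by
    have h1 : (Finset.univ.filter (fun p : Fin F × Fin K => A p.1 p.2 ≠ none)).card
        = ∑ k : Fin K, (Finset.univ.filter (fun j => A j k ≠ none)).card :=
      card_prod_filter_cols (fun j k => A j k ≠ none)
    have h2 : ∀ k : Fin K, (Finset.univ.filter (fun j => A j k ≠ none)).card = F - Z := by
      intro k
      have h := Finset.card_filter_add_card_filter_not
        (s := (Finset.univ : Finset (Fin F))) (p := fun j => A j k = none)
      rw [hC1 k] at h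
      simp only [Finset.card_univ, Fintype.card_fin, ne_eq,
        Finset.filter_congr_decidable] at h ⊢
      omega
    have h3 : (Finset.univ.filter (fun p : Fin F × Fin K => A p.1 p.2 ≠ none))
        = Finset.univ.biUnion (fun s : Fin S =>
            Finset.univ.filter (fun p : Fin F × Fin K => A p.1 p.2 = some s)) := by
      ext p
      simp [Option.ne_none_iff_exists']
    have h4 : (Finset.univ.filter (fun p : Fin F × Fin K => A p.1 p.2 ≠ none)).card
        = S * g := by
      have hg' : ∀ s : Fin S,
          (Finset.univ.filter (fun p : Fin F × Fin K => A p.1 p.2 = some s)).card = g := hg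
      rw [h3, Finset.card_biUnion]
      · simp [hg', Finset.sum_const]
      · intro s _ s' _ hss'
        rw [Function.onFun, Finset.disjoint_left]
        intro p hp hp'
        simp only [Finset.mem_filter, Finset.mem_univ, true_and] at hp hp'
        rw [hp] at hp'
        exact hss' (Option.some_injective _ hp')
    rw [← h4, h1]
    simp [h2, Finset.sum_const, mul_comm]
  -- each row has at least g - L stars  (i.e. g ≤ L + stars in the row)
  have hrow : ∀ j : Fin F,
      g ≤ L + (Finset.univ.filter (fun k => A j k = none)).card := by
    intro j
    by_cases hx : ∃ k s, A j k = some s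
    · obtain ⟨k0, s, hk0⟩ := hx
      have h4 := hC4 s j ⟨k0, hk0⟩
      have hsub : (Finset.univ.filter (fun k : Fin K => ∃ j', A j' k = some s))
          ⊆ (Finset.univ.filter
              (fun k : Fin K => (∃ j', A j' k = some s) ∧ A j k ≠ none))
            ∪ (Finset.univ.filter (fun k => A j k = none)) := by
        intro k hk
        simp only [Finset.mem_filter, Finset.mem_univ, true_and, Finset.mem_union] at *
        by_cases hstar : A j k = none
        · exact Or.inr hstar
        · exact Or.inl ⟨hk, hstar⟩
      have := Finset.card_le_card hsub
      have hu := Finset.card_union_le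
        (Finset.univ.filter
          (fun k : Fin K => (∃ j', A j' k = some s) ∧ A j k ≠ none))
        (Finset.univ.filter (fun k : Fin K => A j k = none))
      rw [hcols s] at this
      omega
    · push_neg at hx
      have hall : (Finset.univ.filter (fun k : Fin K => A j k = none))
          = Finset.univ := by
        ext k
        simp only [Finset.mem_filter, Finset.mem_univ, true_and, iff_true]
        cases h : A j k with
        | none => rfl
        | some s => exact absurd h (hx k s)
      rw [hall]
      simp only [Finset.card_univ, Fintype.card_fin]
      omega
  -- total stars = K * Z, hence F * g ≤ F * L + t * F
  have hstars : ∑ j : Fin F, (Finset.univ.filter (fun k => A j k = none)).card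
      = K * Z := by
    rw [← card_prod_filter_rows (fun j k => A j k = none),
      card_prod_filter_cols (fun j k => A j k = none)]
    simp [hC1, Finset.sum_const, mul_comm]
  have hFg : F * g ≤ F * L + t * F := by
    have h := Finset.sum_le_sum (fun j (_ : j ∈ (Finset.univ : Finset (Fin F))) => hrow j)
    rw [Finset.sum_add_distrib, hstars, Finset.sum_const, Finset.sum_const] at h
    simp only [Finset.card_univ, Fintype.card_fin, smul_eq_mul] at h
    calc F * g ≤ F * L + K * Z := h
      _ = F * L + t * F := by rw [htF]; ring
  have hgtL : g ≤ t + L := by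
    have : F * g ≤ F * (t + L) := by nlinarith
    exact Nat.le_of_mul_le_mul_left this hF
  -- t ≤ K
  have htK : t ≤ K := by
    have h1 : t * F ≤ K * F := by
      calc t * F = Z * K := htF
        _ ≤ F * K := Nat.mul_le_mul_right K hZF
        _ = K * F := Nat.mul_comm F K
    exact Nat.le_of_mul_le_mul_right h1 hF
  -- rational identities
  have hSg : (S : ℚ) * g = ((K : ℚ) - t) * F := by
    have h1 : (S : ℚ) * g = (K : ℚ) * F - (K : ℚ) * Z := by
      have := hcount
      have hc : ((S * g : ℕ) : ℚ) = ((K * (F - Z) : ℕ) : ℚ) := by exact_mod_cast this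
      push_cast [Nat.cast_sub hZF] at hc
      linarith [hc]
    have h2 : (t : ℚ) * F = (Z : ℚ) * K := by exact_mod_cast htF
    linarith [h1, h2]
  have eq2 : (S : ℚ) / F = ((K : ℚ) - t) / g := by
    rw [div_eq_div_iff hF0 hg0]
    linarith [hSg]
  have eq1 : (S : ℚ) / F = (K : ℚ) / g * (1 - (Z : ℚ) / F) := by
    rw [htZ, eq2]
    field_simp
  refine ⟨eq1, eq2, hgtL, ?_⟩
  rw [eq2]
  have hnum : (0 : ℚ) ≤ (K : ℚ) - t := by
    have : (t : ℚ) ≤ K := by exact_mod_cast htK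
    linarith
  have hgpos' : (0 : ℚ) < g := by positivity
  have hle : (g : ℚ) ≤ (t : ℚ) + L := by exact_mod_cast hgtL
  gcongr
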